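/- Let V be a nonempty topological space, W a topological space, and G a nontrivial path-connected topological group. Assume the following hypothesis (H): for every group homomorphism h : C(V,G) → G that is range decreasing (h(x) ∈ x(V) for all x) and does not vanish identically on the null-homotopic maps (i.e. there is a null-homotopic x with h(x) ≠ 1), there exists v ∈ V such that h(x) = x(v) for every x ∈ C(V,G) whose coset [x] modulo the null-homotopic maps contains a non-surjective map. Let f : C(V,G) → C(W,G) be a group homomorphism such that: (i) for every w ∈ W there is a null-homotopic x ∈ C(V,G) with f(x)(w) ≠ 1; (ii) for every w ∈ W the map G → G, g ↦ f(c_g)(w), is surjective, where c_g is the constant map with value g; (iii) for every x ∈ C(V,G) with x(v) ≠ 1 for all v ∈ V, we have f(x)(w) ≠ 1 for all w ∈ W. Then there exist maps φ : W → V, γ : W → Aut(G) (abstract group automorphisms of G), and ψ : C(V,G) × W → G such that for every w ∈ W the map x ↦ ψ(x,w) is a group homomorphism with values in the center Z(G), ψ(x,w) = 1 whenever the coset [x] contains a non-surjective map, and f(x)(w) = γ(w)(ψ(x,w)·x(φ(w))) for all x ∈ C(V,G) and w ∈ W. -/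

import Mathlib

open ContinuousMap

private lemma comm_homotopic_left {V G : Type*} [TopologicalSpace V] [TopologicalSpace G]
    [Group G] [IsTopologicalGroup G] [PathConnectedSpace G] (x : C(V, G)) (g : G) :
    (ContinuousMap.const V g * (x * ContinuousMap.const V g * x⁻¹)⁻¹ : C(V, G)).Homotopic 1 := by
  obtain ⟨p⟩ := PathConnectedSpace.joined g 1
  refine ⟨{ toFun := fun q => p q.1 * x q.2 * (p q.1)⁻¹ * (x q.2)⁻¹
            continuous_toFun := by continuity
            map_zero_left := ?_
            map_one_left := ?_ }⟩
  · intro v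
    simp [p.source, mul_assoc]
  · intro v
    simp

private lemma const_not_surjective {V G : Type*} [TopologicalSpace V] [TopologicalSpace G]
    [Group G] [Nontrivial G] (g : G) :
    ¬Function.Surjective ⇑(ContinuousMap.const V g) := by
  obtain ⟨g', hg'⟩ := exists_ne g
  intro hs
  obtain ⟨v, hv⟩ := hs g'
  simp at hv
  exact hg' hv.symm

/-- Let `V` be nonempty, `W` a space, `G` a nontrivial path-connected
topological group. Assume hypothesis (H): every range decreasing group homomorphism
`h : C(V,G) → G` not vanishing identically on null-homotopic maps agrees with an evaluation on
all cosets containing a non-surjective map. If `f : C(V,G) → C(W,G)` is a group homomorphism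
satisfying (i), (ii), (iii), then `f` is a weighted composition operator:
`f x w = γ(w) (ψ(x,w) * x (φ w))` with `γ(w) ∈ Aut(G)` and `ψ(·,w)` a central-valued
homomorphism vanishing on cosets containing a non-surjective map. -/
theorem weighted_composition_representation {V W G : Type*} [TopologicalSpace V] [Nonempty V]
    [TopologicalSpace W] [TopologicalSpace G] [Group G] [IsTopologicalGroup G]
    [PathConnectedSpace G] [Nontrivial G]
    (hH : ∀ h : C(V, G) →* G, (∀ x : C(V, G), h x ∈ Set.range ⇑x) →
      (∃ x : C(V, G), x.Homotopic 1 ∧ h x ≠ 1) →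
      ∃ v : V, ∀ x : C(V, G),
        (∃ x₀ : C(V, G), (x₀ * x⁻¹).Homotopic 1 ∧ ¬Function.Surjective ⇑x₀) → h x = x v)
    (f : C(V, G) →* C(W, G))
    (h1 : ∀ w : W, ∃ x : C(V, G), x.Homotopic 1 ∧ f x w ≠ 1)
    (h2 : ∀ w : W, Function.Surjective (fun g : G => f (ContinuousMap.const V g) w))
    (h3 : ∀ x : C(V, G), (∀ v : V, x v ≠ 1) → ∀ w : W, f x w ≠ 1) :
    ∃ (φ : W → V) (γ : W → MulAut G) (ψ : C(V, G) → W → G),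
      (∀ w : W, ∀ x y : C(V, G), ψ (x * y) w = ψ x w * ψ y w) ∧
      (∀ (w : W) (x : C(V, G)), ψ x w ∈ Subgroup.center G) ∧
      (∀ (w : W) (x : C(V, G)),
        (∃ x₀ : C(V, G), (x₀ * x⁻¹).Homotopic 1 ∧ ¬Function.Surjective ⇑x₀) → ψ x w = 1) ∧
      (∀ (x : C(V, G)) (w : W), f x w = γ w (ψ x w * x (φ w))) := by
  classical
  have key : ∀ w : W, ∃ (v : V) (γ : MulAut G),
      (∀ x y : C(V, G),
        (((x * y) v)⁻¹ * γ.symm (f (x * y) w)) =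
          ((x v)⁻¹ * γ.symm (f x w)) * ((y v)⁻¹ * γ.symm (f y w))) ∧
      (∀ x : C(V, G), (x v)⁻¹ * γ.symm (f x w) ∈ Subgroup.center G) ∧
      (∀ x : C(V, G),
        (∃ x₀ : C(V, G), (x₀ * x⁻¹).Homotopic 1 ∧ ¬Function.Surjective ⇑x₀) →
          (x v)⁻¹ * γ.symm (f x w) = 1) ∧
      (∀ x : C(V, G), f x w = γ (((x v)⁻¹ * γ.symm (f x w)) * x v)) := by
    intro w
    -- the automorphism coming from constants
    have hconst_mul : ∀ a b : G,
        ContinuousMap.const V (a * b) = ContinuousMap.const V a * ContinuousMap.const V b :=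
      fun a b => rfl
    have hconst_one : ContinuousMap.const V (1 : G) = 1 := rfl
    let cw : G →* G :=
      { toFun := fun g => f (ContinuousMap.const V g) w
        map_one' := by
          show f (ContinuousMap.const V (1 : G)) w = 1
          rw [hconst_one, map_one]; rfl
        map_mul' := fun a b => by
          show f (ContinuousMap.const V (a * b)) w
            = f (ContinuousMap.const V a) w * f (ContinuousMap.const V b) w
          rw [hconst_mul, map_mul]; rfl }
    have cw_inj : Function.Injective cw := by
      rw [injective_iff_map_eq_one]
      intro g hg
      by_contra hg1
      exact h3 (ContinuousMap.const V g) (fun v => by simpa using hg1) w hg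
    have cw_surj : Function.Surjective cw := h2 w
    let γw : MulAut G := MulEquiv.ofBijective cw ⟨cw_inj, cw_surj⟩
    have hγconst : ∀ g : G, γw g = f (ContinuousMap.const V g) w := fun g => rfl
    -- the range decreasing homomorphism
    let hw : C(V, G) →* G :=
      { toFun := fun x : C(V, G) => γw.symm (f x w)
        map_one' := by
          show γw.symm (f (1 : C(V, G)) w) = 1
          rw [map_one]
          exact map_one γw.symm
        map_mul' := fun a b => by
          show γw.symm (f (a * b) w) = γw.symm (f a w) * γw.symm (f b w)
          rw [map_mul]
          exact map_mul γw.symm _ _ }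
    have hw_def : ∀ x : C(V, G), hw x = γw.symm (f x w) := fun x => rfl
    have hγhw : ∀ x : C(V, G), γw (hw x) = f x w := fun x => γw.apply_symm_apply _
    have hrd : ∀ x : C(V, G), hw x ∈ Set.range ⇑x := by
      intro x
      by_contra hc
      have hne : ∀ v : V, (x * ContinuousMap.const V (hw x)⁻¹) v ≠ 1 := by
        intro v h
        simp only [ContinuousMap.mul_apply, ContinuousMap.const_apply, mul_inv_eq_one] at h
        exact hc ⟨v, h⟩
      refine h3 _ hne w ?_
      have : f (x * ContinuousMap.const V (hw x)⁻¹) w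
          = f x w * (f (ContinuousMap.const V (hw x)) w)⁻¹ := by
        rw [show ContinuousMap.const V (hw x)⁻¹ = (ContinuousMap.const V (hw x))⁻¹ from rfl,
          map_mul, map_inv]
        rfl
      rw [this, ← hγconst, hγhw, mul_inv_cancel]
    have hnt : ∃ x : C(V, G), x.Homotopic 1 ∧ hw x ≠ 1 := by
      obtain ⟨x₀, hx₀h, hx₀⟩ := h1 w
      refine ⟨x₀, hx₀h, fun h => hx₀ ?_⟩
      rw [← hγhw, h, map_one]
    obtain ⟨v, hv⟩ := hH hw hrd hnt
    -- hw agrees with evaluation on constants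
    have hconst : ∀ g : G, hw (ContinuousMap.const V g) = g := by
      intro g
      have := hv (ContinuousMap.const V g)
        ⟨ContinuousMap.const V g, by
          rw [mul_inv_cancel]
          try exact ContinuousMap.Homotopic.refl 1,
          const_not_surjective g⟩
      simpa using this
    -- conjugation identity
    have hconj : ∀ (x : C(V, G)) (g : G),
        hw x * g * (hw x)⁻¹ = x v * g * (x v)⁻¹ := by
      intro x g
      have h1' := hv (x * ContinuousMap.const V g * x⁻¹)
        ⟨ContinuousMap.const V g, comm_homotopic_left x g, const_not_surjective g⟩
      have h2' : hw (x * ContinuousMap.const V g * x⁻¹) = hw x * g * (hw x)⁻¹ := by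
        rw [map_mul, map_mul, map_inv, hconst]
      rw [h2'] at h1'
      simpa using h1'
    have hcent : ∀ x : C(V, G), (x v)⁻¹ * hw x ∈ Subgroup.center G := by
      intro x
      rw [Subgroup.mem_center_iff]
      intro g
      have h' := hconj x g
      calc g * ((x v)⁻¹ * hw x) = (x v)⁻¹ * (x v * g * (x v)⁻¹ * hw x) := by group
        _ = (x v)⁻¹ * (hw x * g * (hw x)⁻¹ * hw x) := by rw [h']
        _ = (x v)⁻¹ * hw x * g := by group
    refine ⟨v, γw, ?_, ?_, ?_, ?_⟩
    · intro x y
      simp only [← hw_def]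
      have hc := Subgroup.mem_center_iff.mp (hcent x)
      calc ((x * y) v)⁻¹ * hw (x * y)
          = (y v)⁻¹ * (((x v)⁻¹ * hw x) * hw y) := by
            rw [map_mul]
            simp only [ContinuousMap.mul_apply]
            group
        _ = ((y v)⁻¹ * ((x v)⁻¹ * hw x)) * hw y := by group
        _ = (((x v)⁻¹ * hw x) * (y v)⁻¹) * hw y := by rw [hc]
        _ = ((x v)⁻¹ * hw x) * ((y v)⁻¹ * hw y) := by group
    · intro x
      exact hcent x
    · intro x hx
      rw [← hw_def, hv x hx, inv_mul_cancel]
    · intro x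
      have hc := Subgroup.mem_center_iff.mp (hcent x)
      have hx : ((x v)⁻¹ * hw x) * x v = hw x := by
        rw [← hc (x v)]; group
      rw [← hw_def, hx, hγhw]
  choose φ γ hmul hcent hvan hrep using key
  exact ⟨φ, γ, fun x w => (x (φ w))⁻¹ * (γ w).symm (f x w),
    fun w x y => hmul w x y, fun w x => hcent w x, fun w x => hvan w x, fun x w => hrep w x⟩
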